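/- Let E be a set, and let n ≥ 1 and p ≥ 2 be integers. Let a, b : {1, …, n} → E (interpreting a_i and b_i as the starting point c_i(0) and the ending point c_i(a_i) of the i-th Lipschitz curve, so that the 1-current S = Σ_{i=1}^n c_{i♯}⟦χ_{[0,a_i]}⟧ has boundary ∂S = Σ_{i=1}^n (⟦b_i⟧ − ⟦a_i⟧)). Assume that for every point z ∈ E the integer card{i ∈ {1,…,n} : b_i = z} − card{i ∈ {1,…,n} : a_i = z} is divisible by p (i.e. ∂S ∈ p·I_0(E)). Then there exists a subset J ⊆ {1, …, n} such that for every z ∈ E one has card{i ∈ {1,…,n} : b_i = z} − card{i ∈ {1,…,n} : a_i = z} = p · (card{j ∈ J : b_j = z} − card{j ∈ J : a_j = z}) (i.e. the current S' = S − p·Σ_{j∈J} c_{j♯}⟦χ_{[0,a_j]}⟧ is a cycle). -/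

import Mathlib

open Finset

set_option linter.unusedSectionVars false

section Aux

variable {E : Type*} [DecidableEq E] {n : ℕ} (p : ℕ) (a b : Fin n → E)

def incE (i : Fin n) (z : E) : ℤ := (if b i = z then 1 else 0) - (if a i = z then 1 else 0)

def dvg (w : Fin n → ℤ) (z : E) : ℤ := ∑ i, w i * incE a b i z

def sgl (i : Fin n) (c : ℤ) : Fin n → ℤ := fun j => if j = i then c else 0

lemma dvg_sgl (i : Fin n) (c : ℤ) (z : E) : dvg a b (sgl i c) z = c * incE a b i z := by
  classical
  simp only [dvg, sgl, ite_mul, zero_mul]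
  rw [Finset.sum_ite_eq' Finset.univ i (fun j => c * incE a b j z)]
  simp

lemma dvg_add (w w' : Fin n → ℤ) (z : E) :
    dvg a b (w + w') z = dvg a b w z + dvg a b w' z := by
  simp [dvg, add_mul, Finset.sum_add_distrib]

lemma dvg_linear (w σ : Fin n → ℤ) (δ : ℤ) (z : E) :
    dvg a b (fun i => w i + δ * σ i) z = dvg a b w z + δ * dvg a b σ z := by
  simp [dvg, add_mul, Finset.sum_add_distrib, Finset.mul_sum, mul_assoc]

variable (F : Finset (Fin n))

def pairEq (u v x y : E) : Prop := (u = x ∧ v = y) ∨ (u = y ∧ v = x)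

def adjF (x y : E) : Prop := ∃ i, i ∈ F ∧ pairEq (a i) (b i) x y

lemma adjF_symm {x y : E} (h : adjF a b F x y) : adjF a b F y x := by
  obtain ⟨i, hi, h⟩ := h
  exact ⟨i, hi, h.elim (fun h => Or.inr ⟨h.1, h.2⟩) (fun h => Or.inl ⟨h.1, h.2⟩)⟩

open Classical in
noncomputable def eta (x y : E) : Fin n → ℤ :=
  if h : adjF a b F x y then
    sgl h.choose (if a h.choose = x then 1 else -1)
  else 0

variable (Hnl : ∀ i ∈ F, a i ≠ b i)

include Hnl in
lemma adjF_ne {x y : E} (h : adjF a b F x y) : x ≠ y := by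
  obtain ⟨i, hi, h⟩ := h
  rcases h with ⟨h1, h2⟩ | ⟨h1, h2⟩ <;> rintro rfl <;> exact Hnl i hi (h1.trans h2.symm)

include Hnl in
lemma dvg_eta {x y : E} (h : adjF a b F x y) (z : E) :
    dvg a b (eta a b F x y) z = (if y = z then 1 else 0) - (if x = z then 1 else 0) := by
  rw [eta, dif_pos h, dvg_sgl]
  obtain ⟨hiF, hp⟩ := h.choose_spec
  have hxy : x ≠ y := adjF_ne a b F Hnl h
  rcases hp with ⟨h1, h2⟩ | ⟨h1, h2⟩
  · rw [if_pos h1, incE, h1, h2, one_mul]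
  · rw [if_neg (by rw [h1]; exact hxy.symm), incE, h1, h2]; ring

lemma eta_supp {x y : E} {j : Fin n} (hj : eta a b F x y j ≠ 0) :
    adjF a b F x y ∧ j ∈ F ∧ pairEq (a j) (b j) x y := by
  rw [eta] at hj
  split at hj
  · next h =>
    obtain ⟨hiF, hp⟩ := h.choose_spec
    simp only [sgl] at hj
    split at hj
    · next he => subst he; exact ⟨h, hiF, hp⟩
    · exact absurd rfl hj
  · exact absurd rfl hj

lemma eta_vals (x y : E) (j : Fin n) :
    eta a b F x y j = 0 ∨ eta a b F x y j = 1 ∨ eta a b F x y j = -1 := by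
  rw [eta]
  split
  · simp only [sgl]; split
    · split <;> simp
    · simp
  · simp

lemma eta_choose {x y : E} (h : adjF a b F x y) :
    eta a b F x y h.choose = 1 ∨ eta a b F x y h.choose = -1 := by
  rw [eta, dif_pos h, sgl, if_pos rfl]
  split <;> simp

/-- signed indicator of a walk -/
noncomputable def walkS : List E → (Fin n → ℤ)
  | [] => 0
  | [_] => 0
  | x :: y :: t => eta a b F x y + walkS (y :: t)

def consec (u v : E) : List E → Prop := fun l => ∃ t1 t2, l = t1 ++ u :: v :: t2

lemma consec_mem {u v : E} {l : List E} (h : consec u v l) : u ∈ l ∧ v ∈ l := by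
  obtain ⟨t1, t2, rfl⟩ := h
  constructor <;> simp

lemma consec_cons {u v x : E} {l : List E} (h : consec u v l) : consec u v (x :: l) := by
  obtain ⟨t1, t2, rfl⟩ := h
  exact ⟨x :: t1, t2, rfl⟩

lemma walkS_supp : ∀ (l : List E) (j : Fin n), walkS a b F l j ≠ 0 →
    ∃ u v, consec u v l ∧ j ∈ F ∧ pairEq (a j) (b j) u v
  | [], j, hj => absurd rfl hj
  | [_], j, hj => absurd rfl hj
  | x :: y :: t, j, hj => by
    rw [walkS] at hj
    by_cases h2 : walkS a b F (y :: t) j = 0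
    · have h1 : eta a b F x y j ≠ 0 := by
        simpa [h2] using hj
      obtain ⟨_, hjF, hp⟩ := eta_supp a b F h1
      exact ⟨x, y, ⟨[], t, rfl⟩, hjF, hp⟩
    · obtain ⟨u, v, hc, hjF, hp⟩ := walkS_supp (y :: t) j h2
      exact ⟨u, v, consec_cons hc, hjF, hp⟩

lemma pairEq_trans {u v x y x' y' : E} (h1 : pairEq u v x y) (h2 : pairEq u v x' y') :
    pairEq x y x' y' := by
  rcases h1 with ⟨rfl, rfl⟩ | ⟨rfl, rfl⟩ <;>
    rcases h2 with ⟨h3, h4⟩ | ⟨h3, h4⟩ <;> simp_all [pairEq]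

lemma walkS_vals : ∀ (l : List E), l.Nodup → ∀ (j : Fin n),
    walkS a b F l j = 0 ∨ walkS a b F l j = 1 ∨ walkS a b F l j = -1
  | [], _, j => Or.inl rfl
  | [_], _, j => Or.inl rfl
  | x :: y :: t, hnd, j => by
    rw [walkS]
    by_cases h1 : eta a b F x y j = 0
    · simpa [h1] using walkS_vals (y :: t) (List.Nodup.of_cons hnd) j
    · obtain ⟨hadj, hjF, hp⟩ := eta_supp a b F h1
      have h2 : walkS a b F (y :: t) j = 0 := by
        by_contra h2
        obtain ⟨u, v, hc, _, hp'⟩ := walkS_supp a b F (y :: t) j h2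
        have := pairEq_trans hp hp'
        have hx : x ∈ y :: t := by
          rcases this with ⟨h3, _⟩ | ⟨h3, _⟩
          · rw [h3]; exact (consec_mem hc).1
          · rw [h3]; exact (consec_mem hc).2
        exact (List.nodup_cons.mp hnd).1 hx
      rcases eta_vals a b F x y j with h | h | h
      · exact absurd h h1
      · simp [h, h2]
      · simp [h, h2]

include Hnl in
lemma walkS_dvg (l : List E) : ∀ (x : E), List.Chain' (adjF a b F) (x :: l) → ∀ z,
    dvg a b (walkS a b F (x :: l)) z =
      ((if (x :: l).getLast (by simp) = z then 1 else 0) - (if x = z then 1 else 0) : ℤ) := by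
  induction l with
  | nil => intro x _ z; simp [walkS, dvg]; by_cases h : x = z <;> simp [h]
  | cons y t ih =>
    intro x hc z
    have hadj : adjF a b F x y := (List.isChain_cons_cons.mp hc).1
    rw [walkS, dvg_add, dvg_eta a b F Hnl hadj, ih y (List.isChain_cons_cons.mp hc).2 z,
      List.getLast_cons (by simp : (y :: t) ≠ [])]
    ring

lemma walkS_append_singleton : ∀ (l : List E) (h : l ≠ []) (u : E),
    walkS a b F (l ++ [u]) = walkS a b F l + eta a b F (l.getLast h) u
  | [], h, u => absurd rfl h
  | [x], _, u => by simp [walkS]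
  | x :: y :: t, _, u => by
    have this := walkS_append_singleton (y :: t) (by simp) u
    simp only [List.cons_append] at this ⊢
    rw [walkS, walkS, this, List.getLast_cons (by simp : (y :: t) ≠ []), add_assoc]

lemma no_consec_head_last {v0 y u v : E} {m : List E}
    (hnd : (v0 :: m).Nodup)
    (hlast : (v0 :: m).getLast (by simp) = y)
    (hlen : 3 ≤ (v0 :: m).length)
    (hne : v0 ≠ y)
    (hc : consec u v (v0 :: m)) (hp : pairEq u v y v0) : False := by
  obtain ⟨t1, t2, heq⟩ := hc
  have hv0m : v0 ∉ m := (List.nodup_cons.mp hnd).1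
  rcases hp with ⟨hu, hv⟩ | ⟨hu, hv⟩ <;> rw [hu, hv] at heq
  · -- list = t1 ++ y :: v0 :: t2
    cases t1 with
    | nil =>
      injection heq with h1 _
      exact hne h1
    | cons w t1' =>
      rw [List.cons_append] at heq
      injection heq with h1 h2
      apply hv0m
      rw [h2]
      simp
  · -- list = t1 ++ v0 :: y :: t2
    cases t1 with
    | nil =>
      injection heq with h1 h2
      -- m = y :: t2, getLast = y
      subst h2
      have hy : y ∉ t2 := by
        have := (List.nodup_cons.mp hnd).2
        exact (List.nodup_cons.mp this).1
      cases t2 with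
      | nil => simp at hlen
      | cons r t2' =>
        apply hy
        have : (v0 :: y :: r :: t2').getLast (by simp) = y := hlast
        rw [List.getLast_cons (by simp : (y :: r :: t2' : List E) ≠ []),
          List.getLast_cons (by simp : (r :: t2' : List E) ≠ [])] at this
        rw [← this]
        exact List.getLast_mem _
    | cons w t1' =>
      rw [List.cons_append] at heq
      injection heq with h1 h2
      apply hv0m
      rw [h2]
      simp

lemma pairEq_comm {u v x y : E} (h : pairEq u v x y) : pairEq x y u v := by
  rcases h with ⟨h1, h2⟩ | ⟨h1, h2⟩
  · exact Or.inl ⟨h1.symm, h2.symm⟩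
  · exact Or.inr ⟨h2.symm, h1.symm⟩

def GoodSigma (σ : Fin n → ℤ) : Prop :=
  (∀ z, dvg a b σ z = 0) ∧ (∀ j, σ j = 0 ∨ σ j = 1 ∨ σ j = -1) ∧
    (∀ j, σ j ≠ 0 → j ∈ F) ∧ (∃ j, σ j ≠ 0)

include Hnl in
lemma sigma_of_cycle {v0 y : E} {m : List E}
    (hch : List.Chain' (adjF a b F) (v0 :: m))
    (hnd : (v0 :: m).Nodup)
    (hlast : (v0 :: m).getLast (by simp) = y)
    (hlen : 3 ≤ (v0 :: m).length)
    (hadj : adjF a b F y v0) :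
    ∃ σ, GoodSigma a b F σ := by
  have hne : v0 ≠ y := (adjF_ne a b F Hnl hadj).symm
  have key : ∀ j, pairEq (a j) (b j) y v0 → walkS a b F (v0 :: m) j = 0 := by
    intro j hp
    by_contra h
    obtain ⟨u, v, hc, _, hp'⟩ := walkS_supp a b F _ j h
    exact no_consec_head_last hnd hlast hlen hne hc (pairEq_trans hp' hp)
  refine ⟨walkS a b F (v0 :: m) + eta a b F y v0, ?_, ?_, ?_, ?_⟩
  · intro z
    rw [dvg_add, walkS_dvg a b F Hnl m v0 hch z, dvg_eta a b F Hnl hadj z, hlast]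
    ring
  · intro j
    by_cases he : eta a b F y v0 j = 0
    · have := walkS_vals a b F (v0 :: m) hnd j
      simpa [he] using this
    · obtain ⟨_, hjF, hp⟩ := eta_supp a b F he
      have hw : walkS a b F (v0 :: m) j = 0 := key j hp
      have := eta_vals a b F y v0 j
      simpa [hw] using this
  · intro j hj
    rw [Pi.add_apply] at hj
    by_cases he : eta a b F y v0 j = 0
    · have hw : walkS a b F (v0 :: m) j ≠ 0 := by simpa [he] using hj
      exact (walkS_supp a b F _ j hw).choose_spec.choose_spec.2.1
    · exact (eta_supp a b F he).2.1
  · refine ⟨hadj.choose, ?_⟩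
    have hp : pairEq (a hadj.choose) (b hadj.choose) y v0 := hadj.choose_spec.2
    have hw : walkS a b F (v0 :: m) hadj.choose = 0 := key _ hp
    rcases eta_choose a b F hadj with h | h <;> simp [Pi.add_apply, hw, h]

variable (Hpair : ∀ i ∈ F, ∀ j ∈ F, pairEq (a i) (b i) (a j) (b j) → i = j)
variable (Hdeg : ∀ i0 ∈ F, ∀ x, (a i0 = x ∨ b i0 = x) →
    ∃ j, j ∈ F ∧ j ≠ i0 ∧ (a j = x ∨ b j = x))

include Hnl Hpair Hdeg in
lemma findCycle : ∀ (fuel : ℕ) (l : List E), List.Chain' (adjF a b F) l → l.Nodup →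
    2 ≤ l.length → (∀ e ∈ l, e ∈ (F.image a ∪ F.image b)) →
    (F.image a ∪ F.image b).card + 1 ≤ l.length + fuel →
    ∃ σ, GoodSigma a b F σ := by
  intro fuel
  induction fuel with
  | zero =>
    intro l _ hnd _ hmem hcard
    exfalso
    have h1 : l.toFinset.card = l.length := List.toFinset_card_of_nodup hnd
    have h2 : l.toFinset ⊆ F.image a ∪ F.image b := by
      intro e he
      exact hmem e (List.mem_toFinset.mp he)
    have := Finset.card_le_card h2
    omega
  | succ fuel ih =>
    intro l hch hnd hlen hmem hcard
    rcases l with _ | ⟨v0, _ | ⟨v1, t⟩⟩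
    · simp at hlen
    · simp at hlen
    have h01 : adjF a b F v0 v1 := (List.isChain_cons_cons.mp hch).1
    obtain ⟨hi0F, hp0⟩ := h01.choose_spec
    set i0 := h01.choose with hi0
    have hv0 : a i0 = v0 ∨ b i0 = v0 := by
      rcases hp0 with ⟨h1, _⟩ | ⟨_, h2⟩
      · exact Or.inl h1
      · exact Or.inr h2
    obtain ⟨i1, hi1F, hne10, hi1v0⟩ := Hdeg i0 hi0F v0 hv0
    set y := if a i1 = v0 then b i1 else a i1 with hy
    have hpy : pairEq (a i1) (b i1) v0 y := by
      rcases hi1v0 with h | h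
      · rw [hy, if_pos h]; exact Or.inl ⟨h, rfl⟩
      · by_cases h' : a i1 = v0
        · rw [hy, if_pos h']; exact Or.inl ⟨h', rfl⟩
        · rw [hy, if_neg h']; exact Or.inr ⟨rfl, h⟩
    have hyv0 : y ≠ v0 := by
      have := Hnl i1 hi1F
      rcases hpy with ⟨h1, h2⟩ | ⟨h1, h2⟩
      · rw [← h2, ← h1]; exact fun hh => this hh.symm
      · rw [← h1, ← h2]; exact this
    have hadjy : adjF a b F v0 y := ⟨i1, hi1F, hpy⟩
    have hyv1 : y ≠ v1 := by
      intro hh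
      apply hne10
      apply Hpair i1 hi1F i0 hi0F
      have h1 : pairEq v0 v1 (a i1) (b i1) := pairEq_comm (hh ▸ hpy)
      have h2 : pairEq v0 v1 (a i0) (b i0) := pairEq_comm hp0
      exact pairEq_trans h1 h2
    by_cases hmy : y ∈ v0 :: v1 :: t
    · -- found a cycle
      obtain ⟨t1, t2, heq⟩ := List.append_of_mem hmy
      rcases t1 with _ | ⟨w1, _ | ⟨w2, t1'⟩⟩
      · exfalso; injection heq with h1 _; exact hyv0 h1.symm
      · exfalso
        injection heq with h1 h2
        injection h2 with h3 _
        exact hyv1 h3.symm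
      · rw [List.cons_append, List.cons_append] at heq
        injection heq with e1 e2
        injection e2 with e3 e4
        subst e1; subst e3
        have hceq : (v0 :: v1 :: t : List E) = (v0 :: (v1 :: (t1' ++ [y]))) ++ t2 := by
          simp [e4]
        have hchc : List.Chain' (adjF a b F) (v0 :: (v1 :: (t1' ++ [y]))) :=
          List.IsChain.prefix (hceq ▸ hch) ⟨t2, rfl⟩
        have hndc : (v0 :: (v1 :: (t1' ++ [y]))).Nodup := by
          have := hceq ▸ hnd
          exact (List.nodup_append.mp (by simpa using this)).1
        have hlastc : ((v0 :: (v1 :: (t1' ++ [y])) : List E)).getLast (by simp) = y :=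
          List.getLast_append_singleton (v0 :: v1 :: t1')
        have hlenc : 3 ≤ (v0 :: (v1 :: (t1' ++ [y])) : List E).length := by
          simp
        exact sigma_of_cycle a b F Hnl hchc hndc hlastc hlenc (adjF_symm a b F hadjy)
    · -- extend the path
      apply ih (y :: v0 :: v1 :: t)
      · exact List.isChain_cons_cons.mpr ⟨adjF_symm a b F hadjy, hch⟩
      · exact List.nodup_cons.mpr ⟨hmy, hnd⟩
      · simp
      · intro e he
        rcases List.mem_cons.mp he with rfl | he'
        · rcases hpy with ⟨_, h2⟩ | ⟨h1, _⟩
          · exact Finset.mem_union_right _ (h2 ▸ Finset.mem_image_of_mem b hi1F)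
          · exact Finset.mem_union_left _ (h1 ▸ Finset.mem_image_of_mem a hi1F)
        · exact hmem e he'
      · simp only [List.length_cons] at hcard ⊢
        omega

include Hnl Hpair Hdeg in
lemma getSigma (hF : F.Nonempty) : ∃ σ, GoodSigma a b F σ := by
  obtain ⟨i, hiF⟩ := hF
  apply findCycle a b F Hnl Hpair Hdeg ((F.image a ∪ F.image b).card) [a i, b i]
  · exact List.isChain_pair.mpr ⟨i, hiF, Or.inl ⟨rfl, rfl⟩⟩
  · simp [Hnl i hiF]
  · simp
  · intro e he
    rcases List.mem_cons.mp he with rfl | he'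
    · exact Finset.mem_union_left _ (Finset.mem_image_of_mem a hiF)
    · rcases List.mem_cons.mp he' with rfl | he''
      · exact Finset.mem_union_right _ (Finset.mem_image_of_mem b hiF)
      · simp at he''
  · simp only [List.length_cons, List.length_nil]
    omega

/-- indices with fractional weight -/
def Frac (w : Fin n → ℤ) : Finset (Fin n) :=
  Finset.univ.filter (fun i => ¬(w i = 0 ∨ w i = (p : ℤ)))

lemma mem_Frac {w : Fin n → ℤ} {i : Fin n} :
    i ∈ Frac p w ↔ ¬(w i = 0 ∨ w i = (p : ℤ)) := by
  simp only [Frac, Finset.mem_filter, Finset.mem_univ, true_and]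

lemma Frac_pos {w : Fin n → ℤ} (hw0 : ∀ i, 0 ≤ w i) (hwp : ∀ i, w i ≤ (p : ℤ))
    {i : Fin n} (hi : i ∈ Frac p w) : 0 < w i ∧ w i < (p : ℤ) := by
  rw [mem_Frac] at hi
  push_neg at hi
  exact ⟨lt_of_le_of_ne (hw0 i) (Ne.symm hi.1), lt_of_le_of_ne (hwp i) hi.2⟩

lemma frac_two_incident (hp : 0 < p) (w : Fin n → ℤ)
    (hw0 : ∀ i, 0 ≤ w i) (hwp : ∀ i, w i ≤ (p : ℤ))
    (hd : ∀ z, (p : ℤ) ∣ dvg a b w z)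
    (Hnl : ∀ i ∈ Frac p w, a i ≠ b i) :
    ∀ i0 ∈ Frac p w, ∀ x, (a i0 = x ∨ b i0 = x) →
      ∃ j, j ∈ Frac p w ∧ j ≠ i0 ∧ (a j = x ∨ b j = x) := by
  intro i0 hi0 x hx
  by_contra h
  push_neg at h
  have hsum : dvg a b w x = w i0 * incE a b i0 x +
      ∑ j ∈ Finset.univ.erase i0, w j * incE a b j x :=
    (Finset.add_sum_erase _ _ (Finset.mem_univ i0)).symm
  have hdvd2 : (p : ℤ) ∣ ∑ j ∈ Finset.univ.erase i0, w j * incE a b j x := by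
    apply Finset.dvd_sum
    intro j hj
    have hji0 : j ≠ i0 := (Finset.mem_erase.mp hj).1
    by_cases hjF : j ∈ Frac p w
    · have hne := h j hjF hji0
      have hinc : incE a b j x = 0 := by
        rw [incE, if_neg hne.2, if_neg hne.1]; ring
      rw [hinc, mul_zero]
      exact dvd_zero _
    · have hor : w j = 0 ∨ w j = (p : ℤ) := by
        by_contra hh
        exact hjF ((mem_Frac p).mpr hh)
      rcases hor with h0 | h0
      · rw [h0, zero_mul]; exact dvd_zero _
      · rw [h0]; exact dvd_mul_right _ _
  have hdvd1 : (p : ℤ) ∣ w i0 * incE a b i0 x := by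
    have hdx := hd x
    rw [hsum, add_comm] at hdx
    exact (dvd_add_right hdvd2).mp hdx
  have hab := Hnl i0 hi0
  have hdvd0 : (p : ℤ) ∣ w i0 := by
    rcases hx with hxa | hxb
    · have hbx : b i0 ≠ x := fun hh => hab (hxa ▸ hh.symm ▸ rfl)
      have : incE a b i0 x = -1 := by rw [incE, if_neg hbx, if_pos hxa]; ring
      rw [this] at hdvd1
      simpa using (dvd_neg.mpr hdvd1)
    · have hax : a i0 ≠ x := fun hh => hab (hh ▸ hxb ▸ rfl)
      have : incE a b i0 x = 1 := by rw [incE, if_pos hxb, if_neg hax]; ring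
      rw [this, mul_one] at hdvd1
      exact hdvd1
  obtain ⟨hpos, hlt⟩ := Frac_pos p hw0 hwp hi0
  have := Int.le_of_dvd hpos hdvd0
  omega

lemma roundAux (hp : 0 < p) : ∀ (k : ℕ) (w : Fin n → ℤ), (∀ i, 0 ≤ w i) →
    (∀ i, w i ≤ (p : ℤ)) → (∀ z, (p : ℤ) ∣ dvg a b w z) → (Frac p w).card ≤ k →
    ∃ w' : Fin n → ℤ, (∀ i, w' i = 0 ∨ w' i = (p : ℤ)) ∧
      (∀ z, dvg a b w' z = dvg a b w z) := by
  intro k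
  induction k with
  | zero =>
    intro w hw0 hwp hd hcard
    refine ⟨w, fun i => ?_, fun z => rfl⟩
    by_contra hh
    push_neg at hh
    have : i ∈ Frac p w := (mem_Frac p).mpr (by tauto)
    have := Finset.card_pos.mpr ⟨i, this⟩
    omega
  | succ k ih =>
    intro w hw0 hwp hd hcard
    by_cases hF : Frac p w = ∅
    · refine ⟨w, fun i => ?_, fun z => rfl⟩
      by_contra hh
      push_neg at hh
      have : i ∈ Frac p w := (mem_Frac p).mpr (by tauto)
      rw [hF] at this
      simp at this
    · have hFne : (Frac p w).Nonempty := Finset.nonempty_of_ne_empty hF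
      -- obtain a good circulation σ
      have hσ : ∃ σ, GoodSigma a b (Frac p w) σ := by
        by_cases hA : ∃ i ∈ Frac p w, a i = b i
        · obtain ⟨i, hiF, hab⟩ := hA
          refine ⟨sgl i 1, fun z => ?_, fun j => ?_, fun j hj => ?_, ⟨i, ?_⟩⟩
          · rw [dvg_sgl, one_mul, incE, hab]; ring
          · simp only [sgl]; split <;> simp
          · simp only [sgl] at hj
            split at hj
            · next hh => rw [hh]; exact hiF
            · exact absurd rfl hj
          · simp [sgl]
        · by_cases hB : ∃ i ∈ Frac p w, ∃ j ∈ Frac p w, i ≠ j ∧ a i = a j ∧ b i = b j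
          · obtain ⟨i, hiF, j, hjF, hij, ha, hb⟩ := hB
            refine ⟨sgl i 1 + sgl j (-1), fun z => ?_, fun j' => ?_, fun j' hj' => ?_, ⟨i, ?_⟩⟩
            · rw [dvg_add, dvg_sgl, dvg_sgl, incE, incE, ha, hb]; ring
            · simp only [Pi.add_apply, sgl]
              rcases Decidable.em (j' = i) with rfl | hne
              · rw [if_pos rfl, if_neg hij]; simp
              · rw [if_neg hne]
                split <;> simp
            · simp only [Pi.add_apply, sgl] at hj'
              rcases Decidable.em (j' = i) with rfl | hne
              · exact hiF
              · rcases Decidable.em (j' = j) with rfl | hne2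
                · exact hjF
                · rw [if_neg hne, if_neg hne2] at hj'
                  simp at hj' 
            · simp [sgl, Pi.add_apply, hij]
          · by_cases hC : ∃ i ∈ Frac p w, ∃ j ∈ Frac p w, i ≠ j ∧ a i = b j ∧ b i = a j
            · obtain ⟨i, hiF, j, hjF, hij, ha, hb⟩ := hC
              refine ⟨sgl i 1 + sgl j 1, fun z => ?_, fun j' => ?_, fun j' hj' => ?_, ⟨i, ?_⟩⟩
              · rw [dvg_add, dvg_sgl, dvg_sgl, incE, incE, ha, hb]; ring
              · simp only [Pi.add_apply, sgl]
                rcases Decidable.em (j' = i) with rfl | hne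
                · rw [if_pos rfl, if_neg hij]; simp
                · rw [if_neg hne]
                  split <;> simp
              · simp only [Pi.add_apply, sgl] at hj'
                rcases Decidable.em (j' = i) with rfl | hne
                · exact hiF
                · rcases Decidable.em (j' = j) with rfl | hne2
                  · exact hjF
                  · rw [if_neg hne, if_neg hne2] at hj'
                    simp at hj' 
              · simp [sgl, Pi.add_apply, hij]
            · have Hnl : ∀ i ∈ Frac p w, a i ≠ b i := by
                intro i hi hh
                exact hA ⟨i, hi, hh⟩
              have Hpair : ∀ i ∈ Frac p w, ∀ j ∈ Frac p w,
                  pairEq (a i) (b i) (a j) (b j) → i = j := by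
                intro i hi j hj hpij
                by_contra hij
                rcases hpij with ⟨h1, h2⟩ | ⟨h1, h2⟩
                · exact hB ⟨i, hi, j, hj, hij, h1, h2⟩
                · exact hC ⟨i, hi, j, hj, hij, h1, h2⟩
              exact getSigma a b (Frac p w) Hnl Hpair
                (frac_two_incident p a b hp w hw0 hwp hd Hnl) hFne
      obtain ⟨σ, hσdvg, hσvals, hσsupp, j0, hj0⟩ := hσ
      set T : Finset (Fin n) := Finset.univ.filter (fun i => σ i ≠ 0) with hT
      have hTne : T.Nonempty := ⟨j0, by simp [hT, hj0]⟩
      set g : Fin n → ℤ := fun i => if σ i = 1 then (p : ℤ) - w i else w i with hg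
      set δ : ℤ := T.inf' hTne g with hδ
      have hmemT : ∀ i ∈ T, σ i ≠ 0 := fun i hi => by
        have := (Finset.mem_filter.mp hi).2
        simpa using this
      have hTF : ∀ i ∈ T, i ∈ Frac p w := fun i hi => hσsupp i (hmemT i hi)
      have hδpos : 0 < δ := by
        rw [hδ, Finset.lt_inf'_iff]
        intro i hi
        obtain ⟨h1, h2⟩ := Frac_pos p hw0 hwp (hTF i hi)
        simp only [hg]
        split <;> omega
      have hδle1 : ∀ i ∈ T, σ i = 1 → δ ≤ (p : ℤ) - w i := by
        intro i hi h1
        have h := Finset.inf'_le g hi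
        rw [← hδ] at h
        simpa [hg, h1] using h
      have hδle2 : ∀ i ∈ T, σ i = -1 → δ ≤ w i := by
        intro i hi h1
        have h := Finset.inf'_le g hi
        rw [← hδ] at h
        simpa [hg, h1] using h
      obtain ⟨istar, histar, hstar⟩ := Finset.exists_mem_eq_inf' hTne g
      rw [← hδ] at hstar
      have hbnd : ∀ i, 0 ≤ w i + δ * σ i ∧ w i + δ * σ i ≤ (p : ℤ) := by
        intro i
        rcases hσvals i with h0 | h1 | h1
        · rw [h0, mul_zero, add_zero]
          exact ⟨hw0 i, hwp i⟩
        · have hiT : i ∈ T := by simp [hT, h1]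
          have := hδle1 i hiT h1
          obtain ⟨hp1, hp2⟩ := Frac_pos p hw0 hwp (hTF i hiT)
          rw [h1, mul_one]
          omega
        · have hiT : i ∈ T := by simp [hT, h1]
          have := hδle2 i hiT h1
          obtain ⟨hp1, hp2⟩ := Frac_pos p hw0 hwp (hTF i hiT)
          rw [h1, mul_neg_one]
          omega
      have hdvg' : ∀ z, dvg a b (fun i => w i + δ * σ i) z = dvg a b w z := by
        intro z
        rw [dvg_linear, hσdvg z, mul_zero, add_zero]
      have hstarval : (σ istar = 1 → w istar + δ * σ istar = (p : ℤ)) ∧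
          (σ istar = -1 → w istar + δ * σ istar = 0) := by
        constructor <;> intro h1 <;> rw [h1] <;> rw [hstar] <;> simp [hg, h1]
      have hsub : Frac p (fun i => w i + δ * σ i) ⊆ (Frac p w).erase istar := by
        intro i hi
        have hifrac : ¬(w i + δ * σ i = 0 ∨ w i + δ * σ i = (p : ℤ)) := by
          have := (mem_Frac p).mp hi
          simpa using this
        rw [Finset.mem_erase]
        rcases hσvals i with h0 | h1 | h1
        · have hiF : i ∈ Frac p w := by
            apply (mem_Frac p).mpr
            rw [h0, mul_zero, add_zero] at hifrac
            exact hifrac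
          refine ⟨?_, hiF⟩
          intro hh
          rw [hh] at h0
          exact hmemT istar histar h0
        · have hiT : i ∈ T := by simp [hT, h1]
          refine ⟨?_, hTF i hiT⟩
          intro hh
          apply hifrac
          right
          rw [hh]
          exact hstarval.1 (hh ▸ h1)
        · have hiT : i ∈ T := by simp [hT, h1]
          refine ⟨?_, hTF i hiT⟩
          intro hh
          apply hifrac
          left
          rw [hh]
          exact hstarval.2 (hh ▸ h1)
      have hcard' : (Frac p (fun i => w i + δ * σ i)).card ≤ k := by
        have h1 := Finset.card_le_card hsub
        have h2 : ((Frac p w).erase istar).card = (Frac p w).card - 1 :=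
          Finset.card_erase_of_mem (hTF istar histar)
        have h3 : 1 ≤ (Frac p w).card := Finset.card_pos.mpr hFne
        omega
      obtain ⟨w'', hw''vals, hw''dvg⟩ := ih (fun i => w i + δ * σ i)
        (fun i => (hbnd i).1) (fun i => (hbnd i).2)
        (fun z => (hdvg' z) ▸ hd z) hcard'
      exact ⟨w'', hw''vals, fun z => (hw''dvg z).trans (hdvg' z)⟩

lemma dvg_one (z : E) : dvg a b (fun _ => (1 : ℤ)) z =
    ((Finset.univ.filter fun i => b i = z).card : ℤ) -
      ((Finset.univ.filter fun i => a i = z).card : ℤ) := by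
  simp [dvg, incE, Finset.sum_sub_distrib, Finset.sum_boole]

end Aux

/-- combinatorial content of the decomposition lemma for 1-cycles mod p:
given curves with starting points `a i` and ending points `b i`, if for every point `z`
the boundary multiplicity `#{i : b i = z} − #{i : a i = z}` is divisible by `p`, then there
is a subfamily `J` such that subtracting `p` times the curves indexed by `J` produces a
cycle, i.e. for every `z` the boundary multiplicity equals `p` times the corresponding
boundary multiplicity of the subfamily. -/
theorem exists_subfamily_cycle_mod_p {E : Type*} [DecidableEq E]
    (n p : ℕ) (hn : 1 ≤ n) (hp : 2 ≤ p) (a b : Fin n → E)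
    (hdiv : ∀ z : E, (p : ℤ) ∣
      ((Finset.univ.filter fun i => b i = z).card : ℤ) -
        ((Finset.univ.filter fun i => a i = z).card : ℤ)) :
    ∃ J : Finset (Fin n), ∀ z : E,
      ((Finset.univ.filter fun i => b i = z).card : ℤ) -
          ((Finset.univ.filter fun i => a i = z).card : ℤ) =
        (p : ℤ) * (((J.filter fun j => b j = z).card : ℤ) -
          ((J.filter fun j => a j = z).card : ℤ)) := by
  have hp0 : 0 < p := by omega
  have hd : ∀ z, (p : ℤ) ∣ dvg a b (fun _ => (1 : ℤ)) z := by
    intro z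
    rw [dvg_one]
    exact hdiv z
  have hcard : (Frac p (fun _ : Fin n => (1 : ℤ))).card ≤ n := by
    calc (Frac p (fun _ : Fin n => (1 : ℤ))).card ≤ (Finset.univ : Finset (Fin n)).card :=
          Finset.card_le_card (Finset.subset_univ _)
      _ = n := by simp
  obtain ⟨w', hvals, hdvg⟩ := roundAux p a b hp0 n (fun _ => 1)
    (fun i => by norm_num) (fun i => by show (1:ℤ) ≤ (p:ℤ); exact_mod_cast Nat.one_le_of_lt hp) hd hcard
  refine ⟨Finset.univ.filter (fun i => w' i ≠ 0), fun z => ?_⟩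
  rw [← dvg_one a b z, ← hdvg z]
  have h2 : dvg a b w' z =
      ∑ i ∈ Finset.univ.filter (fun i => w' i ≠ 0), w' i * incE a b i z := by
    rw [dvg]
    refine (Finset.sum_subset (Finset.subset_univ _) ?_).symm
    intro x _ hx
    have hx0 : w' x = 0 := by
      by_contra hh
      exact hx (Finset.mem_filter.mpr ⟨Finset.mem_univ x, hh⟩)
    rw [hx0, zero_mul]
  have h3 : ∀ i ∈ Finset.univ.filter (fun i => w' i ≠ 0),
      w' i * incE a b i z = (p : ℤ) * incE a b i z := by
    intro i hi
    have hne : w' i ≠ 0 := (Finset.mem_filter.mp hi).2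
    have : w' i = (p : ℤ) := (hvals i).resolve_left hne
    rw [this]
  rw [h2, Finset.sum_congr rfl h3, ← Finset.mul_sum]
  congr 1
  simp [incE, Finset.sum_sub_distrib, Finset.sum_boole]
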